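/- For a functor U : 𝒜 ⥤ ℬ, the following are equivalent: (1) U is a right multi-adjoint; (2) U has a relative left adjoint along ι_𝒜, i.e. there is a functor L : ℬ ⥤ Π𝒜 with natural isomorphisms Π𝒜(L(B), ι_𝒜(A)) ≅ ℬ(B, U(A)) for all B in ℬ and A in 𝒜; (3) the free product extension ΠU : Π𝒜 ⥤ Πℬ (sending (A_i)_{i∈I} to (U(A_i))_{i∈I}) has a left adjoint. -/

import Mathlib

open CategoryTheory CategoryTheory.Limits

universe v u₁ u₂

namespace Diers

/-- An object of the free product completion `Π𝒜` of `𝒜`: a set-indexed family of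
objects of `𝒜`. -/
structure FamObj.{w, u} (𝒜 : Type u) : Type (max u (w + 1)) where
  I : Type w
  obj : I → 𝒜

variable {𝒜 : Type u₁} {ℬ : Type u₂} [Category.{v} 𝒜] [Category.{v} ℬ]

/-- A morphism `(Aᵢ)_{i∈I} ⟶ (Bⱼ)_{j∈J}` of the free product completion: a function
`α : J → I` together with a `J`-indexed family of morphisms `A_{α(j)} ⟶ Bⱼ`. -/
structure FamHom (X Y : FamObj.{v} 𝒜) : Type v where
  idx : Y.I → X.I
  hom : ∀ j : Y.I, X.obj (idx j) ⟶ Y.obj j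

theorem FamHom.ext' {X Y : FamObj.{v} 𝒜} {f g : FamHom X Y}
    (h₁ : f.idx = g.idx) (h₂ : HEq f.hom g.hom) : f = g := by
  cases f; cases g; cases h₁; cases h₂; rfl

/-- The free product completion `Π𝒜` of `𝒜`. -/
instance famCategory : Category.{v} (FamObj.{v} 𝒜) where
  Hom := FamHom
  id X := ⟨fun i => i, fun i => 𝟙 (X.obj i)⟩
  comp f g := ⟨fun j => f.idx (g.idx j), fun j => f.hom (g.idx j) ≫ g.hom j⟩
  id_comp f := FamHom.ext' rfl (heq_of_eq (funext fun j => Category.id_comp (f.hom j)))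
  comp_id f := FamHom.ext' rfl (heq_of_eq (funext fun j => Category.comp_id (f.hom j)))
  assoc f g h := FamHom.ext' rfl (heq_of_eq (funext fun j => Category.assoc _ _ _))

/-- The canonical full embedding `ι_𝒜 : 𝒜 ↪ Π𝒜` sending an object to the corresponding
singleton family. -/
def famEmbedding : 𝒜 ⥤ FamObj.{v} 𝒜 where
  obj A := ⟨PUnit.{v + 1}, fun _ => A⟩
  map f := ⟨fun j => j, fun _ => f⟩
  map_id _ := rfl
  map_comp _ _ := rfl

/-- The free product extension `ΠU : Π𝒜 ⥤ Πℬ` of a functor `U : 𝒜 ⥤ ℬ`, sending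
`(Aᵢ)_{i∈I}` to `(U(Aᵢ))_{i∈I}`; it is the unique extension of `ι_ℬ ∘ U` along `ι_𝒜`. -/
def famMap (U : 𝒜 ⥤ ℬ) : FamObj.{v} 𝒜 ⥤ FamObj.{v} ℬ where
  obj X := ⟨X.I, fun i => U.obj (X.obj i)⟩
  map f := ⟨f.idx, fun j => U.map (f.hom j)⟩
  map_id X := FamHom.ext' rfl (heq_of_eq (funext fun j => U.map_id _))
  map_comp f g := FamHom.ext' rfl (heq_of_eq (funext fun j => U.map_comp _ _))


/-- A family `X : I → 𝒞` is *multi-initial* if for every object `C` of `𝒞` there is a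
unique index `i : I` and a unique arrow `X i ⟶ C` (uniqueness of the pair `⟨i, f⟩`). -/
def IsMultiInitialFamily {𝒞 : Type*} [Category 𝒞] {I : Type*} (X : I → 𝒞) : Prop :=
  ∀ C : 𝒞, ∃ p : Σ i : I, X i ⟶ C, ∀ q : Σ i : I, X i ⟶ C, q = p

/-- `U : 𝒜 ⥤ ℬ` is a *right multi-adjoint* if for every `B : ℬ` the comma category
`B ↓ U` admits a small multi-initial family. -/
def IsRightMultiAdjoint (U : 𝒜 ⥤ ℬ) : Prop :=
  ∀ B : ℬ, ∃ (I : Type v) (n : I → StructuredArrow B U), IsMultiInitialFamily n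

/-- `U` has a *relative left adjoint along `ι_𝒜`* if there is a functor `L : ℬ ⥤ Π𝒜`
with bijections `Π𝒜(L(B), ι_𝒜(A)) ≅ ℬ(B, U(A))` natural in `B` and `A`. -/
def HasRelativeLeftAdjointAlongEmbedding (U : 𝒜 ⥤ ℬ) : Prop :=
  ∃ (L : ℬ ⥤ FamObj.{v} 𝒜)
    (e : ∀ (B : ℬ) (A : 𝒜), (L.obj B ⟶ famEmbedding.obj A) ≃ (B ⟶ U.obj A)),
    (∀ (B : ℬ) {A A' : 𝒜} (u : A ⟶ A') (φ : L.obj B ⟶ famEmbedding.obj A),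
        e B A' (φ ≫ famEmbedding.map u) = e B A φ ≫ U.map u) ∧
    (∀ {B B' : ℬ} (g : B ⟶ B') {A : 𝒜} (φ : L.obj B' ⟶ famEmbedding.obj A),
        e B A (L.map g ≫ φ) = g ≫ e B' A φ)

/- ### Auxiliary lemmas -/

@[simp] theorem famId_idx (X : FamObj.{v} 𝒜) (j : X.I) :
    (𝟙 X : X ⟶ X).idx j = j := rfl

@[simp] theorem famId_hom (X : FamObj.{v} 𝒜) (j : X.I) :
    (𝟙 X : X ⟶ X).hom j = 𝟙 (X.obj j) := rfl

@[simp] theorem famComp_idx {X Y Z : FamObj.{v} 𝒜} (f : X ⟶ Y) (g : Y ⟶ Z) (j : Z.I) :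
    (f ≫ g).idx j = f.idx (g.idx j) := rfl

@[simp] theorem famComp_hom {X Y Z : FamObj.{v} 𝒜} (f : X ⟶ Y) (g : Y ⟶ Z) (j : Z.I) :
    (f ≫ g).hom j = f.hom (g.idx j) ≫ g.hom j := rfl

theorem FamHom.ext2 {X Y : FamObj.{v} 𝒜} {f g : FamHom X Y}
    (h : ∀ j, ∃ h₁ : f.idx j = g.idx j,
      f.hom j = eqToHom (congrArg X.obj h₁) ≫ g.hom j) : f = g := by
  have h₁ : f.idx = g.idx := funext fun j => (h j).1
  obtain ⟨fi, fh⟩ := f; obtain ⟨gi, gh⟩ := g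
  dsimp at h₁; subst h₁
  refine FamHom.ext' rfl (heq_of_eq (funext fun j => ?_))
  obtain ⟨h₁, h₂⟩ := h j
  simpa using h₂

theorem FamHom.eq_elim {X Y : FamObj.{v} 𝒜} {f g : FamHom X Y} (h : f = g) (j : Y.I) :
    ∃ h₁ : f.idx j = g.idx j, f.hom j = eqToHom (congrArg X.obj h₁) ≫ g.hom j := by
  subst h; exact ⟨rfl, by simp⟩

theorem pair_eq_elim {U : 𝒜 ⥤ ℬ} {B : ℬ} {I : Type*} {n : I → StructuredArrow B U}
    {C : StructuredArrow B U} {p q : Σ i, n i ⟶ C} (h : p = q) :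
    ∃ h₁ : p.1 = q.1,
      p.2.right = eqToHom (congrArg (fun i => (n i).right) h₁) ≫ q.2.right := by
  subst h; exact ⟨rfl, by simp⟩

theorem toRel {U : 𝒜 ⥤ ℬ} (hU : IsRightMultiAdjoint U) :
    HasRelativeLeftAdjointAlongEmbedding U := by
  classical
  choose I n hn using hU
  let sel : ∀ (B : ℬ) (C : StructuredArrow B U), Σ i : I B, n B i ⟶ C :=
    fun B C => (hn B C).choose
  have hsel : ∀ (B : ℬ) (C : StructuredArrow B U) (q : Σ i : I B, n B i ⟶ C),
      q = sel B C := fun B C => (hn B C).choose_spec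
  let L : ℬ ⥤ FamObj.{v} 𝒜 :=
  { obj := fun B => ⟨I B, fun i => (n B i).right⟩
    map := fun {B B'} g =>
      ⟨fun j => (sel B (StructuredArrow.mk (g ≫ (n B' j).hom))).1,
       fun j => (sel B (StructuredArrow.mk (g ≫ (n B' j).hom))).2.right⟩
    map_id := fun B => FamHom.ext2 fun j => by
      have hq := (hsel B (StructuredArrow.mk (𝟙 B ≫ (n B j).hom))
        ⟨j, StructuredArrow.homMk (𝟙 _) (by simp)⟩).symm
      obtain ⟨h₁, h₂⟩ := pair_eq_elim hq
      exact ⟨h₁, by simpa using h₂⟩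
    map_comp := fun {B B' B''} g g' => FamHom.ext2 fun j => by
      set j₁ := (sel B' (StructuredArrow.mk (g' ≫ (n B'' j).hom))).1 with hj₁
      set r₂ := (sel B' (StructuredArrow.mk (g' ≫ (n B'' j).hom))).2.right with hr₂
      set r₁ := (sel B (StructuredArrow.mk (g ≫ (n B' j₁).hom))).2.right with hr₁
      have w₂ : (n B' j₁).hom ≫ U.map r₂ = g' ≫ (n B'' j).hom :=
        StructuredArrow.w (sel B' (StructuredArrow.mk (g' ≫ (n B'' j).hom))).2
      have w₁ : (n B (sel B (StructuredArrow.mk (g ≫ (n B' j₁).hom))).1).hom ≫ U.map r₁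
          = g ≫ (n B' j₁).hom :=
        StructuredArrow.w (sel B (StructuredArrow.mk (g ≫ (n B' j₁).hom))).2
      have hq := (hsel B (StructuredArrow.mk ((g ≫ g') ≫ (n B'' j).hom))
        ⟨(sel B (StructuredArrow.mk (g ≫ (n B' j₁).hom))).1,
          StructuredArrow.homMk (r₁ ≫ r₂) (by
            simp only [StructuredArrow.mk_hom_eq_self, Functor.map_comp]
            rw [← Category.assoc, w₁]
            simp [w₂]) ⟩).symm
      obtain ⟨h₁, h₂⟩ := pair_eq_elim hq
      exact ⟨h₁, by simpa using h₂⟩ }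
  refine ⟨L, fun B A =>
    { toFun := fun φ => (n B (φ.idx PUnit.unit)).hom ≫ U.map (φ.hom PUnit.unit)
      invFun := fun g =>
        ⟨fun _ => (sel B (StructuredArrow.mk g)).1,
         fun _ => (sel B (StructuredArrow.mk g)).2.right⟩
      left_inv := ?_
      right_inv := ?_ }, ?_, ?_⟩
  · intro φ
    have hq := hsel B (StructuredArrow.mk
        ((n B (φ.idx PUnit.unit)).hom ≫ U.map (φ.hom PUnit.unit)))
      ⟨φ.idx PUnit.unit, StructuredArrow.homMk (φ.hom PUnit.unit) rfl⟩
    obtain ⟨h₁, h₂⟩ := pair_eq_elim hq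
    refine (FamHom.ext2 fun j => ?_).symm
    cases j
    exact ⟨h₁, by simp at h₂; exact h₂⟩
  · intro g
    simpa using StructuredArrow.w (sel B (StructuredArrow.mk g)).2
  · intro B A A' u φ
    show (n B (φ.idx PUnit.unit)).hom ≫ U.map (φ.hom PUnit.unit ≫ u) = _
    exact congrArg (fun x => (n B (φ.idx PUnit.unit)).hom ≫ x) (U.map_comp (φ.hom PUnit.unit) u) |>.trans (Category.assoc _ _ _).symm
  · intro B B' g A φ
    set j₁ := φ.idx PUnit.unit with hj₁
    show (n B (sel B (StructuredArrow.mk (g ≫ (n B' j₁).hom))).1).hom ≫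
        U.map ((sel B (StructuredArrow.mk (g ≫ (n B' j₁).hom))).2.right ≫
          φ.hom PUnit.unit) = _
    have w₁ := StructuredArrow.w (sel B (StructuredArrow.mk (g ≫ (n B' j₁).hom))).2
    simp only [StructuredArrow.mk_hom_eq_self] at w₁
    rw [Functor.map_comp, ← Category.assoc, w₁]
    simp
    rfl

theorem relTo {U : 𝒜 ⥤ ℬ} (hU : HasRelativeLeftAdjointAlongEmbedding U) :
    IsRightMultiAdjoint U := by
  obtain ⟨L, e, he₁, he₂⟩ := hU
  intro B
  -- the "unit" morphisms
  let φ₀ : ∀ i : (L.obj B).I, (L.obj B ⟶ famEmbedding.obj ((L.obj B).obj i)) :=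
    fun i => ⟨fun _ => i, fun _ => 𝟙 _⟩
  refine ⟨(L.obj B).I, fun i => StructuredArrow.mk (e B _ (φ₀ i)), fun C => ?_⟩
  -- decompose any φ : L.obj B ⟶ famEmbedding.obj A
  have hdec : ∀ φ : L.obj B ⟶ famEmbedding.obj C.right,
      φ = φ₀ (φ.idx PUnit.unit) ≫ famEmbedding.map (φ.hom PUnit.unit) := by
    intro φ
    refine FamHom.ext2 fun j => ?_
    cases j
    exact ⟨rfl, by
      show φ.hom PUnit.unit = eqToHom _ ≫ 𝟙 _ ≫ φ.hom PUnit.unit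
      simp⟩
  set φ := (e B C.right).symm C.hom with hφ
  have hφe : e B C.right φ = C.hom := (e B C.right).apply_symm_apply _
  refine ⟨⟨φ.idx PUnit.unit, StructuredArrow.homMk (φ.hom PUnit.unit) ?_⟩, ?_⟩
  · show (e B _ (φ₀ (φ.idx PUnit.unit))) ≫ U.map (φ.hom PUnit.unit) = C.hom
    rw [← he₁, ← hdec]
    exact hφe
  · rintro ⟨i', u⟩
    have hu : e B _ (φ₀ i') ≫ U.map u.right = C.hom := by
      simpa using StructuredArrow.w u
    rw [← he₁, ← hφe] at hu
    have hu' : φ₀ i' ≫ famEmbedding.map u.right = φ := (e B C.right).injective hu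
    rw [hdec φ] at hu'
    obtain ⟨h₁, h₂⟩ := FamHom.eq_elim hu' PUnit.unit
    have hi : i' = φ.idx PUnit.unit := h₁
    subst hi
    have hr : u.right = φ.hom PUnit.unit := by
      have := h₂
      simp only [eqToHom_refl, Category.id_comp] at this
      exact (Category.id_comp _).symm.trans (this.trans (Category.id_comp _))
    congr 1
    apply StructuredArrow.hom_ext
    exact hr

theorem toAdj {U : 𝒜 ⥤ ℬ} (hU : IsRightMultiAdjoint U) :
    (famMap U).IsRightAdjoint := by
  classical
  choose I n hn using hU
  let sel : ∀ (B : ℬ) (C : StructuredArrow B U), Σ i : I B, n B i ⟶ C :=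
    fun B C => (hn B C).choose
  have hsel : ∀ (B : ℬ) (C : StructuredArrow B U) (q : Σ i : I B, n B i ⟶ C),
      q = sel B C := fun B C => (hn B C).choose_spec
  have : ∀ Y : FamObj.{v} ℬ, HasInitial (StructuredArrow Y (famMap U)) := by
    intro Y
    let X₀ : FamObj.{v} 𝒜 :=
      ⟨Σ j : Y.I, I (Y.obj j), fun p => (n (Y.obj p.1) p.2).right⟩
    let t₀ : Y ⟶ (famMap U).obj X₀ :=
      ⟨fun p => p.1, fun p => (n (Y.obj p.1) p.2).hom⟩
    refine (IsInitial.ofUniqueHom (X := StructuredArrow.mk t₀) (fun T => ?_)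
      (fun T m => ?_)).hasInitial
    · -- existence
      refine StructuredArrow.homMk
        ⟨fun k => ⟨T.hom.idx k, (sel (Y.obj (T.hom.idx k))
            (StructuredArrow.mk (T.hom.hom k))).1⟩,
         fun k => (sel (Y.obj (T.hom.idx k))
            (StructuredArrow.mk (T.hom.hom k))).2.right⟩ ?_
      refine FamHom.ext2 fun k => ?_
      refine ⟨rfl, ?_⟩
      have := StructuredArrow.w (sel (Y.obj (T.hom.idx k))
        (StructuredArrow.mk (T.hom.hom k))).2
      show t₀.hom _ ≫ U.map _ = eqToHom _ ≫ T.hom.hom k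
      exact this.trans (Category.id_comp _).symm
    · -- uniqueness
      apply StructuredArrow.hom_ext
      have hw := StructuredArrow.w m
      refine FamHom.ext2 fun k => ?_
      obtain ⟨h₁, h₂⟩ := FamHom.eq_elim hw k
      have key : ∀ (p : Σ j : Y.I, I (Y.obj j)) (f : X₀.obj p ⟶ T.right.obj k)
          (hp1 : p.1 = T.hom.idx k)
          (_ : t₀.hom p ≫ U.map f = eqToHom (congrArg Y.obj hp1) ≫ T.hom.hom k),
          ∃ h₁' : p = ⟨T.hom.idx k, (sel (Y.obj (T.hom.idx k))
              (StructuredArrow.mk (T.hom.hom k))).1⟩,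
            f = eqToHom (congrArg X₀.obj h₁') ≫ (sel (Y.obj (T.hom.idx k))
              (StructuredArrow.mk (T.hom.hom k))).2.right := by
        rintro ⟨p₁, p₂⟩ f hp1 hp2
        dsimp at hp1
        subst hp1
        simp only [eqToHom_refl, Category.id_comp] at hp2
        have hq := hsel (Y.obj (T.hom.idx k)) (StructuredArrow.mk (T.hom.hom k))
          ⟨p₂, StructuredArrow.homMk f hp2⟩
        obtain ⟨hq1, hq2⟩ := pair_eq_elim hq
        dsimp at hq1
        subst hq1
        exact ⟨rfl, by simp at hq2 ⊢; exact hq2⟩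
      exact key (m.right.idx k) (m.right.hom k) h₁ h₂
  exact isRightAdjointOfStructuredArrowInitials _

theorem adjTo {U : 𝒜 ⥤ ℬ} (hU : (famMap U).IsRightAdjoint) :
    IsRightMultiAdjoint U := by
  obtain ⟨L, ⟨adj⟩⟩ := hU.exists_leftAdjoint
  intro B
  set X := L.obj (famEmbedding.obj B) with hX
  set η := adj.unit.app (famEmbedding.obj B) with hη
  refine ⟨X.I, fun i => StructuredArrow.mk (η.hom i), fun C => ?_⟩
  -- the correspondence
  let toPair : (X ⟶ famEmbedding.obj C.right) → Σ i : X.I, X.obj i ⟶ C.right :=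
    fun φ => ⟨φ.idx PUnit.unit, φ.hom PUnit.unit⟩
  let gg : famEmbedding.obj B ⟶ (famMap U).obj (famEmbedding.obj C.right) :=
    ⟨fun _ => PUnit.unit, fun _ => C.hom⟩
  set φ := (adj.homEquiv (famEmbedding.obj B) (famEmbedding.obj C.right)).symm gg with hφdef
  have hφ : η ≫ (famMap U).map φ = gg := by
    have := (adj.homEquiv (famEmbedding.obj B)
      (famEmbedding.obj C.right)).apply_symm_apply gg
    rwa [Adjunction.homEquiv_unit] at this
  have hφhom : η.hom (φ.idx PUnit.unit) ≫ U.map (φ.hom PUnit.unit) = C.hom := by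
    obtain ⟨h₁, h₂⟩ := FamHom.eq_elim hφ PUnit.unit
    exact h₂.trans (Category.id_comp _)
  refine ⟨⟨φ.idx PUnit.unit, StructuredArrow.homMk (φ.hom PUnit.unit) hφhom⟩, ?_⟩
  rintro ⟨i', u⟩
  have hu : η.hom i' ≫ U.map u.right = C.hom := by exact StructuredArrow.w u
  let φ' : X ⟶ famEmbedding.obj C.right := ⟨fun _ => i', fun _ => u.right⟩
  have hφ' : η ≫ (famMap U).map φ' = gg := by
    refine FamHom.ext2 fun j => ?_
    cases j
    exact ⟨rfl, hu.trans (Category.id_comp _).symm⟩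
  have heq : φ' = φ := by
    apply (adj.homEquiv _ _).injective
    rw [Adjunction.homEquiv_unit, Adjunction.homEquiv_unit, ← hη, hφ', hφ]
  obtain ⟨h₁, h₂⟩ := FamHom.eq_elim heq PUnit.unit
  have hi : i' = φ.idx PUnit.unit := h₁
  subst hi
  have hr : u.right = φ.hom PUnit.unit := by simp at h₂; exact h₂
  congr 1
  apply StructuredArrow.hom_ext
  exact hr

/-- **Right multi-adjoints via the free product completion.**
For a functor `U : 𝒜 ⥤ ℬ` the following are equivalent: (1) `U` is a right
multi-adjoint; (2) `U` has a relative left adjoint along `ι_𝒜 : 𝒜 ↪ Π𝒜`;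
(3) the free product extension `ΠU : Π𝒜 ⥤ Πℬ` has a left adjoint. -/
theorem isRightMultiAdjoint_iff_relative_iff_famMap_rightAdjoint (U : 𝒜 ⥤ ℬ) :
    (IsRightMultiAdjoint U ↔ HasRelativeLeftAdjointAlongEmbedding U) ∧
    (IsRightMultiAdjoint U ↔ (famMap U).IsRightAdjoint) :=
  ⟨⟨toRel, relTo⟩, ⟨toAdj, adjTo⟩⟩

end Diers
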